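/- Define F : [-1,1] × [0,1] → ℂ by F(s,t) = (s + (1−2t)·i)/((1−2t)·i·s + 1), where i is the imaginary unit. Then: (a) the denominator (1−2t)·i·s + 1 is nonzero for all s ∈ [-1,1] and t ∈ [0,1]; (b) F is Lipschitz on [-1,1] × [0,1] (with respect to the product metric); (c) for every t ∈ [0,1] and all s, s' ∈ [-1,1] one has (1/π)·|s' − s| ≤ |F(s',t) − F(s,t)| ≤ π·|s' − s|. -/

import Mathlib

set_option maxHeartbeats 1000000


open Complex

/-- The isotopy `F(s,t) = (s + (1-2t)i)/((1-2t)is + 1)` from the upper unit semicircle to the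
lower one. -/
noncomputable def bypassIsotopy (p : ℝ × ℝ) : ℂ :=
  ((p.1 : ℂ) + (1 - 2 * (p.2 : ℂ)) * Complex.I) /
    ((1 - 2 * (p.2 : ℂ)) * Complex.I * (p.1 : ℂ) + 1)
private lemma denom_norm_sq (a s : ℝ) : ‖((a:ℂ) * I * s + 1)‖^2 = 1 + a^2*s^2 := by
  rw [Complex.sq_norm]
  simp [Complex.normSq_apply]
  ring

private lemma one_le_denom (a s : ℝ) : 1 ≤ ‖((a:ℂ) * I * s + 1)‖ := by
  nlinarith [denom_norm_sq a s, norm_nonneg ((a:ℂ)*I*s+1), sq_nonneg (a*s)]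

private lemma denom_ne (a s : ℝ) : ((a:ℂ) * I * s + 1) ≠ 0 := by
  intro h
  have := one_le_denom a s
  rw [h] at this
  simp at this
  linarith

private lemma diff_s (a s s' : ℝ) :
    ((s':ℂ) + a*I)/((a:ℂ)*I*s' + 1) - ((s:ℂ) + a*I)/((a:ℂ)*I*s + 1)
      = (((s':ℂ) - s) * (1 + (a:ℂ)^2)) / (((a:ℂ)*I*s' + 1) * ((a:ℂ)*I*s + 1)) := by
  have h1 := denom_ne a s
  have h2 := denom_ne a s'
  rw [div_sub_div _ _ h2 h1]
  congr 1
  linear_combination (a:ℂ)^2 * ((s:ℂ) - s') * I_sq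

private lemma diff_t (a a' s : ℝ) :
    ((s:ℂ) + a*I)/((a:ℂ)*I*s + 1) - ((s:ℂ) + a'*I)/((a':ℂ)*I*s + 1)
      = (I * ((a:ℂ) - a') * (1 - (s:ℂ)^2)) / (((a:ℂ)*I*s + 1) * ((a':ℂ)*I*s + 1)) := by
  have h1 := denom_ne a s
  have h2 := denom_ne a' s
  rw [div_sub_div _ _ h1 h2]
  congr 1
  ring

private lemma norm_diff_s (a s s' : ℝ) :
    ‖((s':ℂ) + a*I)/((a:ℂ)*I*s' + 1) - ((s:ℂ) + a*I)/((a:ℂ)*I*s + 1)‖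
      = |s'-s| * (1+a^2) / (‖((a:ℂ)*I*s' + 1)‖ * ‖((a:ℂ)*I*s + 1)‖) := by
  rw [diff_s, norm_div, norm_mul, norm_mul]
  congr 2
  · rw [show ((s':ℂ) - s) = ((s'-s:ℝ):ℂ) by push_cast; ring, Complex.norm_real, Real.norm_eq_abs]
  · rw [show (1 + (a:ℂ)^2) = ((1+a^2:ℝ):ℂ) by push_cast; ring, Complex.norm_real,
      Real.norm_eq_abs, _root_.abs_of_nonneg (by positivity)]

private lemma norm_diff_t_le (a a' s : ℝ) (hs : s^2 ≤ 1) :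
    ‖((s:ℂ) + a*I)/((a:ℂ)*I*s + 1) - ((s:ℂ) + a'*I)/((a':ℂ)*I*s + 1)‖ ≤ |a - a'| := by
  rw [diff_t, norm_div]
  simp only [norm_mul]
  rw [Complex.norm_I, one_mul,
    show ((a:ℂ) - a') = ((a-a':ℝ):ℂ) by push_cast; ring,
    show (1 - (s:ℂ)^2) = ((1-s^2:ℝ):ℂ) by push_cast; ring,
    Complex.norm_real, Complex.norm_real, Real.norm_eq_abs, Real.norm_eq_abs,
    _root_.abs_of_nonneg (by linarith : (0:ℝ) ≤ 1 - s^2)]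
  have hD := one_le_denom a s
  have hD' := one_le_denom a' s
  rw [div_le_iff₀ (by nlinarith)]
  have h1 : (1:ℝ) ≤ ‖((a:ℂ)*I*s + 1)‖ * ‖((a':ℂ)*I*s + 1)‖ := by nlinarith
  exact mul_le_mul_of_nonneg_left (by nlinarith [sq_nonneg s]) (abs_nonneg _)

private lemma bypass_eq (s t : ℝ) :
    bypassIsotopy (s, t)
      = ((s:ℂ) + ((1-2*t:ℝ):ℂ)*I)/((((1-2*t:ℝ)):ℂ)*I*(s:ℂ) + 1) := by
  simp only [bypassIsotopy]
  push_cast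
  ring_nf

/-- (a) the denominator of `F` never vanishes on `[-1,1] × [0,1]`; (b) `F` is Lipschitz on
`[-1,1] × [0,1]`; (c) each time-slice `F(·,t)` is `π`-bi-Lipschitz. -/
theorem bypassIsotopy_properties :
    (∀ s ∈ Set.Icc (-1:ℝ) 1, ∀ t ∈ Set.Icc (0:ℝ) 1,
      ((1 - 2 * (t : ℂ)) * Complex.I * (s : ℂ) + 1) ≠ 0) ∧
    (∃ K : NNReal, LipschitzOnWith K bypassIsotopy (Set.Icc (-1:ℝ) 1 ×ˢ Set.Icc (0:ℝ) 1)) ∧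
    (∀ t ∈ Set.Icc (0:ℝ) 1, ∀ s ∈ Set.Icc (-1:ℝ) 1, ∀ s' ∈ Set.Icc (-1:ℝ) 1,
      (1 / Real.pi) * |s' - s| ≤ ‖bypassIsotopy (s', t) - bypassIsotopy (s, t)‖ ∧
        ‖bypassIsotopy (s', t) - bypassIsotopy (s, t)‖ ≤ Real.pi * |s' - s|) := by
  refine ⟨?_, ?_, ?_⟩
  · intro s _ t _
    have h := denom_ne (1 - 2*t) s
    push_cast at h
    exact h
  · refine ⟨4, ?_⟩
    rw [lipschitzOnWith_iff_dist_le_mul]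
    rintro ⟨s, t⟩ ⟨hs, ht⟩ ⟨s', t'⟩ ⟨hs', ht'⟩
    simp only [Set.mem_Icc] at hs ht hs' ht'
    have key1 : dist (bypassIsotopy (s, t)) (bypassIsotopy (s', t)) ≤ 2 * |s - s'| := by
      rw [dist_eq_norm, bypass_eq s t, bypass_eq s' t, norm_diff_s (1-2*t) s' s]
      have ha : (1-2*t)^2 ≤ 1 := by nlinarith [ht.1, ht.2]
      have hD := one_le_denom (1-2*t) s
      have hD' := one_le_denom (1-2*t) s'
      rw [div_le_iff₀ (by nlinarith)]
      nlinarith [abs_nonneg (s - s'),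
        mul_le_mul_of_nonneg_left (by nlinarith :
          (1:ℝ) ≤ ‖((1-2*t:ℝ):ℂ)*I*(s:ℂ)+1‖ * ‖((1-2*t:ℝ):ℂ)*I*(s':ℂ)+1‖) (abs_nonneg (s - s'))]
    have key2 : dist (bypassIsotopy (s', t)) (bypassIsotopy (s', t')) ≤ 2 * |t - t'| := by
      rw [dist_eq_norm, bypass_eq s' t, bypass_eq s' t']
      have h := norm_diff_t_le (1-2*t) (1-2*t') s' (by nlinarith [hs'.1, hs'.2])
      have he : |(1-2*t) - (1-2*t')| = 2 * |t - t'| := by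
        rw [show (1-2*t) - (1-2*t') = -(2*(t - t')) by ring, abs_neg, abs_mul]
        norm_num
      rw [he] at h
      exact h
    have htri := dist_triangle (bypassIsotopy (s, t)) (bypassIsotopy (s', t))
      (bypassIsotopy (s', t'))
    have h4 : ((4:NNReal):ℝ) = 4 := by norm_num
    rw [Prod.dist_eq, h4]
    simp only [Real.dist_eq]
    have hm1 := le_max_left |s - s'| |t - t'|
    have hm2 := le_max_right |s - s'| |t - t'|
    calc dist (bypassIsotopy (s, t)) (bypassIsotopy (s', t')) ≤ _ + _ := htri
      _ ≤ 2 * |s - s'| + 2 * |t - t'| := add_le_add key1 key2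
      _ ≤ 4 * max |s - s'| |t - t'| := by linarith
  · intro t ht s hs s' hs'
    simp only [Set.mem_Icc] at ht hs hs'
    rw [bypass_eq s t, bypass_eq s' t, norm_diff_s (1-2*t) s s']
    set D := ‖((1-2*t:ℝ):ℂ)*I*(s:ℂ)+1‖ with hD_def
    set D' := ‖((1-2*t:ℝ):ℂ)*I*(s':ℂ)+1‖ with hD'_def
    have ha : (1-2*t)^2 ≤ 1 := by nlinarith [ht.1, ht.2]
    have hD := one_le_denom (1-2*t) s
    have hD' := one_le_denom (1-2*t) s'
    rw [← hD_def] at hD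
    rw [← hD'_def] at hD'
    have hDsq := denom_norm_sq (1-2*t) s
    have hD'sq := denom_norm_sq (1-2*t) s'
    rw [← hD_def] at hDsq
    rw [← hD'_def] at hD'sq
    have hs2 : s^2 ≤ 1 := by nlinarith [hs.1, hs.2]
    have hs'2 : s'^2 ≤ 1 := by nlinarith [hs'.1, hs'.2]
    have haux : (1-2*t)^2 * s^2 ≤ (1-2*t)^2 := by
      nlinarith [sq_nonneg (1-2*t)]
    have haux' : (1-2*t)^2 * s'^2 ≤ (1-2*t)^2 := by
      nlinarith [sq_nonneg (1-2*t)]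
    have hDD : D' * D ≤ 1 + (1-2*t)^2 := by nlinarith [sq_nonneg (D' - D)]
    have hDD1 : (1:ℝ) ≤ D' * D := by nlinarith
    have hpi3 : (3:ℝ) < Real.pi := Real.pi_gt_three
    constructor
    · rw [le_div_iff₀ (by nlinarith)]
      have hπ' : 1/Real.pi ≤ 1 := by
        rw [div_le_one (by linarith)]; linarith
      have h2 : (1/Real.pi) * |s' - s| ≤ |s' - s| := by
        nlinarith [abs_nonneg (s' - s), mul_le_mul_of_nonneg_right hπ' (abs_nonneg (s' - s))]
      have f1 : (1/Real.pi) * |s' - s| * (D' * D) ≤ |s' - s| * (D' * D) :=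
        mul_le_mul_of_nonneg_right h2 (by nlinarith)
      have f2 : |s' - s| * (D' * D) ≤ |s' - s| * (1 + (1-2*t)^2) :=
        mul_le_mul_of_nonneg_left hDD (abs_nonneg _)
      linarith
    · rw [div_le_iff₀ (by nlinarith)]
      have h4 : Real.pi * |s' - s| ≤ Real.pi * |s' - s| * (D' * D) :=
        le_mul_of_one_le_right (by positivity) hDD1
      have h5 : |s' - s| * (1 + (1-2*t)^2) ≤ Real.pi * |s' - s| := by
        nlinarith [abs_nonneg (s' - s),
          mul_le_mul_of_nonneg_left ha (abs_nonneg (s' - s)),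
          mul_le_mul_of_nonneg_right hpi3.le (abs_nonneg (s' - s))]
      linarith
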